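/- (Haussler-type packing consequence) Let T ⊆ {0,1}^n with VC dimension at most d. Then for every 0 < ε ≤ √n, the maximal ε-separated subset of T in the Euclidean metric of ℝ^n has cardinality at most c(d)·(√n/ε)^{2d}, for some constant c(d) depending only on d. -/

import Mathlib

open Finset Function

namespace Stmt16Aux

variable {α : Type*} [DecidableEq α]

/-- ordered count of pairs at Hamming distance 1 -/
def epc (𝒜 : Finset (Finset α)) : ℕ :=
  #((𝒜 ×ˢ 𝒜).filter fun p => #(symmDiff p.1 p.2) = 1)

lemma mem_symmDiff_finset {A B : Finset α} {i : α} :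
    i ∈ symmDiff A B ↔ (i ∈ A ∧ i ∉ B) ∨ (i ∈ B ∧ i ∉ A) := by
  simp [Finset.mem_symmDiff]

lemma sd_singleton_iff {A B : Finset α} {a : α} (haB : a ∉ B) :
    symmDiff A B = {a} ↔ A = insert a B := by
  constructor
  · intro h
    ext i
    by_cases hia : i = a
    · subst hia
      have : i ∈ symmDiff A B := h ▸ mem_singleton_self i
      rw [mem_symmDiff_finset] at this
      simp only [mem_insert, true_or]
      tauto
    · have : i ∉ symmDiff A B := by rw [h]; simp [hia]
      rw [mem_symmDiff_finset] at this
      simp only [mem_insert, hia, false_or]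
      tauto
  · rintro rfl
    ext i
    rw [mem_symmDiff_finset]
    simp only [mem_insert, mem_singleton]
    constructor
    · rintro (⟨(rfl | hiB), hnB⟩ | ⟨hiB, hnA⟩)
      · rfl
      · exact absurd hiB hnB
      · exact absurd (Or.inr hiB) hnA
    · rintro rfl
      exact Or.inl ⟨Or.inl rfl, haB⟩

lemma symmDiff_erase_both {A B : Finset α} {a : α} (hA : a ∈ A) (hB : a ∈ B) :
    symmDiff (A.erase a) (B.erase a) = symmDiff A B := by
  ext i
  by_cases hia : i = a
  · subst hia
    simp [mem_symmDiff_finset, hA, hB]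
  · simp [mem_symmDiff_finset, mem_erase, hia]

lemma symmDiff_insert_both {A B : Finset α} {a : α} (hA : a ∉ A) (hB : a ∉ B) :
    symmDiff (insert a A) (insert a B) = symmDiff A B := by
  ext i
  by_cases hia : i = a
  · subst hia
    simp [mem_symmDiff_finset, hA, hB]
  · simp [mem_symmDiff_finset, mem_insert, hia]

/-- Haussler's density bound for the one-inclusion (unit-distance) graph. -/
lemma epc_le (u : Finset α) (d : ℕ) (𝒜 : Finset (Finset α))
    (hu : ∀ A ∈ 𝒜, A ⊆ u)
    (hVC : ∀ σ, 𝒜.Shatters σ → #σ ≤ d) :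
    epc 𝒜 ≤ 2 * d * #𝒜 := by
  induction u using Finset.cons_induction generalizing d 𝒜 with
  | empty =>
    have h𝒜 : ∀ A ∈ 𝒜, A = ∅ := fun A hA => subset_empty.1 (hu A hA)
    have h0 : epc 𝒜 = 0 := by
      rw [epc, card_eq_zero, filter_eq_empty_iff]
      rintro ⟨A, B⟩ hp
      rw [mem_product] at hp
      rw [h𝒜 _ hp.1, h𝒜 _ hp.2]
      simp
    omega
  | cons a v ha ih =>
    classical
    set M := 𝒜.memberSubfamily a with hMdef
    set N := 𝒜.nonMemberSubfamily a with hNdef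
    have hMmem : ∀ {B}, B ∈ M ↔ insert a B ∈ 𝒜 ∧ a ∉ B := fun {B} => mem_memberSubfamily
    have hNmem : ∀ {B}, B ∈ N ↔ B ∈ 𝒜 ∧ a ∉ B := fun {B} => mem_nonMemberSubfamily
    -- supports
    have hsubM : ∀ A ∈ M, A ⊆ v := by
      intro A hA
      rw [hMmem] at hA
      intro i hi
      have : i ∈ insert a A := mem_insert_of_mem hi
      have := hu _ hA.1 this
      rw [mem_cons] at this
      rcases this with rfl | h
      · exact absurd hi hA.2
      · exact h
    have hsubN : ∀ A ∈ N, A ⊆ v := by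
      intro A hA
      rw [hNmem] at hA
      intro i hi
      have := hu _ hA.1 hi
      rw [mem_cons] at this
      rcases this with rfl | h
      · exact absurd hi hA.2
      · exact h
    -- VC transfer to union
    have hVCU : ∀ σ, (M ∪ N).Shatters σ → #σ ≤ d := by
      intro σ hσ
      refine hVC σ ?_
      have haσ : a ∉ σ := by
        obtain ⟨B, hB, hσB⟩ := hσ.exists_superset
        intro haσ'
        have : a ∈ B := hσB haσ'
        rw [mem_union, hMmem, hNmem] at hB
        tauto
      intro t ht
      obtain ⟨B, hB, hσB⟩ := hσ ht
      rw [mem_union] at hB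
      rcases hB with hB | hB
      · rw [hMmem] at hB
        exact ⟨insert a B, hB.1, by rw [inter_insert_of_notMem haσ, hσB]⟩
      · rw [hNmem] at hB
        exact ⟨B, hB.1, hσB⟩
    -- VC transfer to intersection
    have hVCI : ∀ σ, (M ∩ N).Shatters σ → 𝒜.Shatters (insert a σ) ∧ a ∉ σ := by
      intro σ hσ
      have haσ : a ∉ σ := by
        obtain ⟨B, hB, hσB⟩ := hσ.exists_superset
        rw [mem_inter, hNmem] at hB
        exact fun haσ' => hB.2.2 (hσB haσ')
      refine ⟨?_, haσ⟩
      intro t ht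
      by_cases hat : a ∈ t
      · obtain ⟨B, hB, hσB⟩ := hσ (show t.erase a ⊆ σ by
          intro i hi
          rw [mem_erase] at hi
          rcases mem_insert.1 (ht hi.2) with rfl | h
          · exact absurd rfl hi.1
          · exact h)
        rw [mem_inter, hMmem] at hB
        refine ⟨insert a B, hB.1.1, ?_⟩
        rw [insert_inter_of_mem (mem_insert_self a B)]
        · rw [inter_insert_of_notMem haσ, hσB, insert_erase hat]
      · obtain ⟨B, hB, hσB⟩ := hσ (show t ⊆ σ by
          intro i hi
          rcases mem_insert.1 (ht hi) with rfl | h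
          · exact absurd hi hat
          · exact h)
        rw [mem_inter, hNmem] at hB
        refine ⟨B, hB.2.1, ?_⟩
        rw [insert_inter_of_notMem hB.2.2, hσB]
    -- decomposition of the pair count
    set P := (𝒜 ×ˢ 𝒜).filter fun p => #(symmDiff p.1 p.2) = 1 with hPdef
    have hsplit : #P = #(P.filter fun p => a ∈ p.1 ∧ a ∈ p.2)
        + #(P.filter fun p => a ∈ p.1 ∧ a ∉ p.2)
        + #(P.filter fun p => a ∉ p.1 ∧ a ∈ p.2)
        + #(P.filter fun p => a ∉ p.1 ∧ a ∉ p.2) := by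
      have h1 := card_filter_add_card_filter_not (s := P) (p := fun p => a ∈ p.1)
      have h2 := card_filter_add_card_filter_not
        (s := P.filter fun p => a ∈ p.1) (p := fun p => a ∈ p.2)
      have h3 := card_filter_add_card_filter_not
        (s := P.filter fun p => ¬ a ∈ p.1) (p := fun p => a ∈ p.2)
      rw [show (P.filter fun p => a ∈ p.1 ∧ a ∈ p.2)
            = (P.filter fun p => a ∈ p.1).filter (fun p => a ∈ p.2) from (filter_filter _ _ _).symm,
          show (P.filter fun p => a ∈ p.1 ∧ a ∉ p.2)
            = (P.filter fun p => a ∈ p.1).filter (fun p => ¬ a ∈ p.2) from (filter_filter _ _ _).symm,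
          show (P.filter fun p => a ∉ p.1 ∧ a ∈ p.2)
            = (P.filter fun p => ¬ a ∈ p.1).filter (fun p => a ∈ p.2) from (filter_filter _ _ _).symm,
          show (P.filter fun p => a ∉ p.1 ∧ a ∉ p.2)
            = (P.filter fun p => ¬ a ∈ p.1).filter (fun p => ¬ a ∈ p.2) from (filter_filter _ _ _).symm]
      omega
    -- the four pieces
    have hsd : ∀ {p : Finset α × Finset α}, p ∈ P → a ∈ p.1 → a ∉ p.2 →
        p.1 = insert a p.2 := by
      rintro ⟨A, B⟩ hp h1 h2
      rw [hPdef, mem_filter] at hp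
      obtain ⟨x, hx⟩ := card_eq_one.1 hp.2
      have hax : a ∈ symmDiff A B := by
        rw [mem_symmDiff_finset]; exact Or.inl ⟨h1, h2⟩
      rw [hx, mem_singleton] at hax
      subst hax
      exact (sd_singleton_iff h2).1 hx
    have hP11 : #(P.filter fun p => a ∈ p.1 ∧ a ∈ p.2) = epc M := by
      unfold epc
      refine card_nbij' (fun p => (p.1.erase a, p.2.erase a))
        (fun p => (insert a p.1, insert a p.2)) ?_ ?_ ?_ ?_
      · rintro ⟨A, B⟩ hp
        rw [mem_coe, mem_filter, hPdef, mem_filter, mem_product] at hp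
        obtain ⟨⟨⟨hA, hB⟩, hcard⟩, haA, haB⟩ := hp
        rw [mem_coe, mem_filter, mem_product]
        refine ⟨⟨?_, ?_⟩, ?_⟩
        · rw [hMmem]; exact ⟨by rwa [insert_erase haA], notMem_erase _ _⟩
        · rw [hMmem]; exact ⟨by rwa [insert_erase haB], notMem_erase _ _⟩
        · show #(symmDiff (A.erase a) (B.erase a)) = 1
          rwa [symmDiff_erase_both haA haB]
      · rintro ⟨A, B⟩ hp
        rw [mem_coe, mem_filter, mem_product, hMmem, hMmem] at hp
        obtain ⟨⟨⟨hA, haA⟩, hB, haB⟩, hcard⟩ := hp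
        rw [mem_coe, mem_filter, hPdef, mem_filter, mem_product]
        exact ⟨⟨⟨hA, hB⟩, by
          show #(symmDiff (insert a A) (insert a B)) = 1
          rwa [symmDiff_insert_both haA haB]⟩,
          mem_insert_self _ _, mem_insert_self _ _⟩
      · rintro ⟨A, B⟩ hp
        rw [mem_coe, mem_filter] at hp
        simp only [Prod.mk.injEq]
        exact ⟨insert_erase hp.2.1, insert_erase hp.2.2⟩
      · rintro ⟨A, B⟩ hp
        rw [mem_coe, mem_filter, mem_product, hMmem, hMmem] at hp
        simp only [Prod.mk.injEq]
        exact ⟨erase_insert hp.1.1.2, erase_insert hp.1.2.2⟩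
    have hP00 : #(P.filter fun p => a ∉ p.1 ∧ a ∉ p.2) = epc N := by
      unfold epc
      congr 1
      rw [hPdef, filter_filter]
      ext ⟨A, B⟩
      simp only [mem_filter, mem_product, hNmem]
      tauto
    have hP10 : #(P.filter fun p => a ∈ p.1 ∧ a ∉ p.2) = #(M ∩ N) := by
      refine card_nbij' (fun p => p.2) (fun B => (insert a B, B)) ?_ ?_ ?_ ?_
      · rintro ⟨A, B⟩ hp
        rw [mem_coe, mem_filter] at hp
        have hAB := hsd hp.1 hp.2.1 hp.2.2
        rw [hPdef, mem_filter, mem_product] at hp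
        obtain ⟨⟨⟨hAA, hBA⟩, hcard⟩, haA, haB⟩ := hp
        rw [mem_coe, mem_inter, hMmem, hNmem]
        exact ⟨⟨hAB ▸ hAA, haB⟩, hBA, haB⟩
      · intro B hB
        rw [mem_coe, mem_inter, hMmem, hNmem] at hB
        rw [mem_coe, mem_filter, hPdef, mem_filter, mem_product]
        refine ⟨⟨⟨hB.1.1, hB.2.1⟩, ?_⟩, mem_insert_self _ _, hB.1.2⟩
        show #(symmDiff (insert a B) B) = 1
        rw [(sd_singleton_iff hB.1.2).2 rfl]
        exact card_singleton a
      · rintro ⟨A, B⟩ hp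
        rw [mem_coe, mem_filter] at hp
        have hAB := hsd hp.1 hp.2.1 hp.2.2
        simp only [Prod.mk.injEq]
        exact ⟨hAB.symm, trivial⟩
      · intro B _; rfl
    have hP01 : #(P.filter fun p => a ∉ p.1 ∧ a ∈ p.2) = #(M ∩ N) := by
      have hsd' : ∀ {p : Finset α × Finset α}, p ∈ P → a ∉ p.1 → a ∈ p.2 →
          p.2 = insert a p.1 := by
        rintro ⟨A, B⟩ hp h1 h2
        rw [hPdef, mem_filter] at hp
        obtain ⟨x, hx⟩ := card_eq_one.1 hp.2
        have hax : a ∈ symmDiff A B := by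
          rw [mem_symmDiff_finset]; exact Or.inr ⟨h2, h1⟩
        rw [hx, mem_singleton] at hax
        subst hax
        rw [symmDiff_comm] at hx
        exact (sd_singleton_iff h1).1 hx
      refine card_nbij' (fun p => p.1) (fun B => (B, insert a B)) ?_ ?_ ?_ ?_
      · rintro ⟨A, B⟩ hp
        rw [mem_coe, mem_filter] at hp
        have hAB := hsd' hp.1 hp.2.1 hp.2.2
        rw [hPdef, mem_filter, mem_product] at hp
        obtain ⟨⟨⟨hAA, hBA⟩, hcard⟩, haA, haB⟩ := hp
        rw [mem_coe, mem_inter, hMmem, hNmem]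
        exact ⟨⟨hAB ▸ hBA, haA⟩, hAA, haA⟩
      · intro B hB
        rw [mem_coe, mem_inter, hMmem, hNmem] at hB
        rw [mem_coe, mem_filter, hPdef, mem_filter, mem_product]
        refine ⟨⟨⟨hB.2.1, hB.1.1⟩, ?_⟩, hB.1.2, mem_insert_self _ _⟩
        show #(symmDiff B (insert a B)) = 1
        rw [symmDiff_comm, (sd_singleton_iff hB.1.2).2 rfl]
        exact card_singleton a
      · rintro ⟨A, B⟩ hp
        rw [mem_coe, mem_filter] at hp
        have hAB := hsd' hp.1 hp.2.1 hp.2.2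
        simp only [Prod.mk.injEq]
        exact ⟨trivial, hAB.symm⟩
      · intro B _; rfl
    -- submodularity-type inequality
    have hMN : epc M + epc N ≤ epc (M ∪ N) + epc (M ∩ N) := by
      have hsub : ((M ×ˢ M).filter fun p => #(symmDiff p.1 p.2) = 1)
          ∪ ((N ×ˢ N).filter fun p => #(symmDiff p.1 p.2) = 1)
          ⊆ ((M ∪ N) ×ˢ (M ∪ N)).filter fun p => #(symmDiff p.1 p.2) = 1 := by
        rintro ⟨A, B⟩ hp
        rw [mem_union, mem_filter, mem_filter, mem_product, mem_product] at hp
        rw [mem_filter, mem_product, mem_union, mem_union]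
        tauto
      have hint : ((M ×ˢ M).filter fun p => #(symmDiff p.1 p.2) = 1)
          ∩ ((N ×ˢ N).filter fun p => #(symmDiff p.1 p.2) = 1)
          = ((M ∩ N) ×ˢ (M ∩ N)).filter fun p => #(symmDiff p.1 p.2) = 1 := by
        ext ⟨A, B⟩
        rw [mem_inter, mem_filter, mem_filter, mem_filter, mem_product, mem_product,
          mem_product, mem_inter, mem_inter]
        tauto
      calc epc M + epc N
          = #(((M ×ˢ M).filter fun p => #(symmDiff p.1 p.2) = 1)
              ∪ ((N ×ˢ N).filter fun p => #(symmDiff p.1 p.2) = 1))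
            + #(((M ×ˢ M).filter fun p => #(symmDiff p.1 p.2) = 1)
              ∩ ((N ×ˢ N).filter fun p => #(symmDiff p.1 p.2) = 1)) :=
            (card_union_add_card_inter _ _).symm
        _ ≤ epc (M ∪ N) + epc (M ∩ N) := by
            rw [hint]
            exact Nat.add_le_add (card_le_card hsub) le_rfl
    -- cardinalities
    have hcardU : #(M ∪ N) + #(M ∩ N) = #M + #N := card_union_add_card_inter _ _
    have hcardA : #M + #N = #𝒜 := card_memberSubfamily_add_card_nonMemberSubfamily _ _
    have hU : epc (M ∪ N) ≤ 2 * d * #(M ∪ N) := by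
      refine ih d _ ?_ hVCU
      intro A hA
      rcases mem_union.1 hA with h | h
      · exact hsubM A h
      · exact hsubN A h
    have hepcA : epc 𝒜 = #P := rfl
    rcases (M ∩ N).eq_empty_or_nonempty with hE | hNE
    · have h0 : epc (M ∩ N) = 0 := by rw [hE]; simp [epc]
      have h0' : #(M ∩ N) = 0 := by rw [hE]; simp
      have : epc 𝒜 ≤ 2 * d * #(M ∪ N) := by omega
      refine this.trans ?_
      have : #(M ∪ N) ≤ #𝒜 := by omega
      exact Nat.mul_le_mul_left _ this
    · -- d ≥ 1
      have hd1 : 1 ≤ d := by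
        have hsh : (M ∩ N).Shatters ∅ := shatters_empty.2 hNE
        have := (hVCI ∅ hsh).1
        have := hVC _ this
        rwa [insert_empty_eq, card_singleton] at this
      have hVCI' : ∀ σ, (M ∩ N).Shatters σ → #σ ≤ d - 1 := by
        intro σ hσ
        obtain ⟨hsh, haσ⟩ := hVCI σ hσ
        have := hVC _ hsh
        rw [card_insert_of_notMem haσ] at this
        omega
      have hI : epc (M ∩ N) ≤ 2 * (d - 1) * #(M ∩ N) := by
        refine ih (d - 1) _ ?_ hVCI'
        intro A hA
        exact hsubM A (mem_inter.1 hA).1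
      obtain ⟨e, rfl⟩ := Nat.exists_eq_add_of_le hd1
      have key : 2 * (1 + e) * #(M ∪ N) + 2 * (1 + e - 1) * #(M ∩ N) + 2 * #(M ∩ N)
          = 2 * (1 + e) * (#(M ∪ N) + #(M ∩ N)) := by
        simp only [Nat.add_sub_cancel_left]
        ring
      have : epc 𝒜 = epc M + epc N + 2 * #(M ∩ N) := by omega
      rw [this]
      calc epc M + epc N + 2 * #(M ∩ N)
          ≤ epc (M ∪ N) + epc (M ∩ N) + 2 * #(M ∩ N) := by omega
        _ ≤ 2 * (1 + e) * #(M ∪ N) + 2 * (1 + e - 1) * #(M ∩ N) + 2 * #(M ∩ N) := by omega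
        _ = 2 * (1 + e) * (#(M ∪ N) + #(M ∩ N)) := key
        _ = 2 * (1 + e) * #𝒜 := by rw [hcardU, hcardA]


lemma sauer_bound [Fintype α] (d : ℕ) (𝒜 : Finset (Finset α))
    (hVC : ∀ σ, 𝒜.Shatters σ → #σ ≤ d) :
    #𝒜 ≤ ∑ i ∈ Iic d, (Fintype.card α).choose i := by
  refine (𝒜.card_le_card_shatterer).trans (Finset.card_shatterer_le_sum_vcDim.trans ?_)
  refine sum_le_sum_of_subset (Iic_subset_Iic.2 ?_)
  exact Finset.sup_le fun s hs => hVC s (mem_shatterer.1 hs)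

variable {n m : ℕ}

/-- projection of a set of coordinates along a sample `g` of coordinates -/
def proj (g : Fin m → Fin n) (p : Finset (Fin n)) : Finset (Fin m) :=
  univ.filter (fun j => g j ∈ p)

lemma mem_proj {g : Fin m → Fin n} {p : Finset (Fin n)} {j : Fin m} :
    j ∈ proj g p ↔ g j ∈ p := by simp [proj]

def wt (𝒜 : Finset (Finset (Fin n))) (g : Fin m → Fin n) (B : Finset (Fin m)) : ℕ :=
  #(𝒜.filter fun p => proj g p = B)

def uu (𝒜 : Finset (Finset (Fin n))) (g : Fin m → Fin n) (j : Fin m) (c : Finset (Fin m)) : ℕ :=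
  #(𝒜.filter fun p => (proj g p).erase j = c ∧ g j ∈ p)

def vv (𝒜 : Finset (Finset (Fin n))) (g : Fin m → Fin n) (j : Fin m) (c : Finset (Fin m)) : ℕ :=
  #(𝒜.filter fun p => (proj g p).erase j = c ∧ g j ∉ p)

/-- min-weighted split count in direction `j` -/
def DD (𝒜 : Finset (Finset (Fin n))) (g : Fin m → Fin n) (j : Fin m) : ℕ :=
  ∑ c ∈ 𝒜.image (fun p => (proj g p).erase j), min (uu 𝒜 g j c) (vv 𝒜 g j c)

/-- VC dimension transfer to projections -/
lemma vc_proj {d : ℕ} {𝒜 : Finset (Finset (Fin n))}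
    (hVC : ∀ σ, 𝒜.Shatters σ → #σ ≤ d) (g : Fin m → Fin n) :
    ∀ τ, (𝒜.image (proj g)).Shatters τ → #τ ≤ d := by
  intro τ hτ
  have hinj : Set.InjOn g τ := by
    intro j hj j' hj' hgj
    by_contra hne
    obtain ⟨B, hB, hτB⟩ := hτ.exists_inter_eq_singleton hj
    obtain ⟨p, _, rfl⟩ := mem_image.1 hB
    have hjB : j ∈ τ ∩ proj g p := hτB ▸ mem_singleton_self j
    have : j' ∈ τ ∩ proj g p := by
      rw [mem_inter, mem_proj]
      rw [mem_inter, mem_proj] at hjB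
      exact ⟨hj', hgj ▸ hjB.2⟩
    rw [hτB, mem_singleton] at this
    exact hne this.symm
  have hcard : #(τ.image g) = #τ := card_image_of_injOn hinj
  have hsh : 𝒜.Shatters (τ.image g) := by
    intro J hJ
    obtain ⟨B, hB, hτB⟩ := hτ (show τ.filter (fun j => g j ∈ J) ⊆ τ from filter_subset _ _)
    obtain ⟨p, hp, rfl⟩ := mem_image.1 hB
    refine ⟨p, hp, ?_⟩
    ext i
    constructor
    · intro hi
      rw [mem_inter, mem_image] at hi
      obtain ⟨⟨j, hjτ, rfl⟩, hip⟩ := hi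
      have : j ∈ τ ∩ proj g p := by rw [mem_inter, mem_proj]; exact ⟨hjτ, hip⟩
      rw [hτB, mem_filter] at this
      exact this.2
    · intro hi
      obtain ⟨j, hjτ, rfl⟩ := mem_image.1 (hJ hi)
      have hjt : j ∈ τ.filter (fun j => g j ∈ J) := mem_filter.2 ⟨hjτ, hi⟩
      rw [← hτB, mem_inter, mem_proj] at hjt
      exact mem_inter.2 ⟨mem_image_of_mem g hjτ, hjt.2⟩
  exact hcard ▸ hVC _ hsh

lemma sauer_proj {d : ℕ} {𝒜 : Finset (Finset (Fin n))}
    (hVC : ∀ σ, 𝒜.Shatters σ → #σ ≤ d) (g : Fin m → Fin n) :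
    #(𝒜.image (proj g)) ≤ ∑ i ∈ Iic d, m.choose i := by
  have := sauer_bound d (𝒜.image (proj g)) (vc_proj hVC g)
  rwa [Fintype.card_fin] at this

lemma cls_update (g : Fin m → Fin n) (j : Fin m) (y : Fin n) (p : Finset (Fin n)) :
    (proj (update g j y) p).erase j = (proj g p).erase j := by
  ext i
  simp only [mem_erase, mem_proj, and_congr_right_iff]
  intro hij
  rw [update_of_ne hij]

/-- indicator sum identity -/
lemma card_as_indicator (s : Finset (Fin n)) :
    ∑ y : Fin n, (if y ∈ s then (1:ℕ) else 0) = #s := by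
  rw [Finset.sum_ite_mem, univ_inter, sum_const, smul_eq_mul, mul_one]

/-- Main lower bound: averaging over the value at `j` splits classes. -/
lemma lower_bound {k : ℕ} {𝒜 : Finset (Finset (Fin n))}
    (hsep : ∀ A ∈ 𝒜, ∀ B ∈ 𝒜, A ≠ B → k ≤ #(symmDiff A B))
    (g : Fin m → Fin n) (j : Fin m) :
    k * (#𝒜 - #(𝒜.image fun p => (proj g p).erase j))
      ≤ 2 * ∑ y : Fin n, DD 𝒜 (update g j y) j := by
  classical
  have hDD : ∀ y : Fin n, DD 𝒜 (update g j y) j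
      = ∑ c ∈ 𝒜.image (fun p => (proj g p).erase j),
          min (#((𝒜.filter fun p => (proj g p).erase j = c).filter fun p => y ∈ p))
              (#((𝒜.filter fun p => (proj g p).erase j = c).filter fun p => y ∉ p)) := by
    intro y
    unfold DD uu vv
    simp only [cls_update, update_self, filter_filter]
  have hkey : ∀ c ∈ 𝒜.image (fun p => (proj g p).erase j),
      (#(𝒜.filter fun p => (proj g p).erase j = c) - 1) * k
      ≤ 2 * ∑ y : Fin n,
          min (#((𝒜.filter fun p => (proj g p).erase j = c).filter fun p => y ∈ p))
              (#((𝒜.filter fun p => (proj g p).erase j = c).filter fun p => y ∉ p)) := by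
    intro c hc
    set f := 𝒜.filter fun p => (proj g p).erase j = c with hf
    have hw1 : 1 ≤ #f := by
      obtain ⟨p, hp, hpc⟩ := mem_image.1 hc
      exact card_pos.2 ⟨p, mem_filter.2 ⟨hp, hpc⟩⟩
    have hUV : ∀ y : Fin n, #(f.filter fun p => y ∈ p) + #(f.filter fun p => y ∉ p) = #f :=
      fun y => card_filter_add_card_filter_not _
    have hprod : ∀ y : Fin n, #(f.filter fun p => y ∈ p) * #(f.filter fun p => y ∉ p)
        ≤ #f * min (#(f.filter fun p => y ∈ p)) (#(f.filter fun p => y ∉ p)) := by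
      intro y
      rcases le_total (#(f.filter fun p => y ∈ p)) (#(f.filter fun p => y ∉ p)) with h | h
      · rw [min_eq_left h, mul_comm]
        exact Nat.mul_le_mul_right _ (by have := hUV y; omega)
      · rw [min_eq_right h]
        exact Nat.mul_le_mul_right _ (by have := hUV y; omega)
    have h1 : ∀ y : Fin n, #(f.filter fun p => y ∈ p) * #(f.filter fun p => y ∉ p)
        = ∑ p ∈ f, ∑ q ∈ f, (if y ∈ p ∧ y ∉ q then (1:ℕ) else 0) := by
      intro y
      rw [card_filter, card_filter, sum_mul_sum]
      refine sum_congr rfl fun p _ => sum_congr rfl fun q _ => ?_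
      by_cases h1 : y ∈ p <;> by_cases h2 : y ∈ q <;> simp [h1, h2]
    have h2 : ∑ y : Fin n, ∑ p ∈ f, ∑ q ∈ f, (if y ∈ p ∧ y ∉ q then (1:ℕ) else 0)
        = ∑ p ∈ f, ∑ q ∈ f, #(p \ q) := by
      rw [sum_comm]
      refine sum_congr rfl fun p _ => ?_
      rw [sum_comm]
      refine sum_congr rfl fun q _ => ?_
      rw [← card_as_indicator (p \ q)]
      exact sum_congr rfl fun y _ => by simp [mem_sdiff]
    have hcsd : ∀ p q : Finset (Fin n), #(p \ q) + #(q \ p) = #(symmDiff p q) := by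
      intro p q
      rw [symmDiff, Finset.sup_eq_union, card_union_of_disjoint disjoint_sdiff_sdiff]
    have h3 : 2 * (∑ p ∈ f, ∑ q ∈ f, #(p \ q)) = ∑ p ∈ f, ∑ q ∈ f, #(symmDiff p q) := by
      rw [two_mul]
      nth_rewrite 2 [show (∑ p ∈ f, ∑ q ∈ f, #(p \ q)) = ∑ p ∈ f, ∑ q ∈ f, #(q \ p) from
        sum_comm]
      rw [← sum_add_distrib]
      refine sum_congr rfl fun p _ => ?_
      rw [← sum_add_distrib]
      exact sum_congr rfl fun q _ => hcsd p q
    have h4 : #f * ((#f - 1) * k) ≤ ∑ p ∈ f, ∑ q ∈ f, #(symmDiff p q) := by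
      calc #f * ((#f - 1) * k) = ∑ _p ∈ f, (#f - 1) * k := by rw [sum_const, smul_eq_mul]
        _ ≤ ∑ p ∈ f, ∑ q ∈ f, #(symmDiff p q) := by
            refine sum_le_sum fun p hp => ?_
            calc (#f - 1) * k = ∑ _q ∈ f.erase p, k := by
                  rw [sum_const, smul_eq_mul, card_erase_of_mem hp]
              _ ≤ ∑ q ∈ f.erase p, #(symmDiff p q) := by
                  refine sum_le_sum fun q hq => ?_
                  have hqp := (mem_erase.1 hq).1
                  have hq𝒜 := (mem_filter.1 (mem_of_mem_erase hq)).1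
                  have hp𝒜 := (mem_filter.1 hp).1
                  exact hsep p hp𝒜 q hq𝒜 (Ne.symm hqp)
              _ ≤ ∑ q ∈ f, #(symmDiff p q) :=
                  sum_le_sum_of_subset (erase_subset _ _)
    -- combine
    have h5 : #f * ((#f - 1) * k)
        ≤ #f * (2 * ∑ y : Fin n,
            min (#(f.filter fun p => y ∈ p)) (#(f.filter fun p => y ∉ p))) := by
      calc #f * ((#f - 1) * k) ≤ ∑ p ∈ f, ∑ q ∈ f, #(symmDiff p q) := h4
        _ = 2 * (∑ p ∈ f, ∑ q ∈ f, #(p \ q)) := h3.symm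
        _ = 2 * ∑ y : Fin n, #(f.filter fun p => y ∈ p) * #(f.filter fun p => y ∉ p) := by
            rw [← h2]
            congr 1
            exact (sum_congr rfl fun y _ => h1 y).symm
        _ ≤ 2 * ∑ y : Fin n, #f *
            min (#(f.filter fun p => y ∈ p)) (#(f.filter fun p => y ∉ p)) := by
            exact Nat.mul_le_mul_left _ (sum_le_sum fun y _ => hprod y)
        _ = #f * (2 * ∑ y : Fin n,
            min (#(f.filter fun p => y ∈ p)) (#(f.filter fun p => y ∉ p))) := by
            rw [← mul_sum]; ring
    exact Nat.le_of_mul_le_mul_left h5 (by omega)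
  -- sum over classes
  have himg : ∑ c ∈ 𝒜.image (fun p => (proj g p).erase j),
      #(𝒜.filter fun p => (proj g p).erase j = c) = #𝒜 :=
    (card_eq_sum_card_fiberwise fun p hp => mem_image_of_mem _ hp).symm
  have hpos : ∀ c ∈ 𝒜.image (fun p => (proj g p).erase j),
      1 ≤ #(𝒜.filter fun p => (proj g p).erase j = c) := by
    intro c hc
    obtain ⟨p, hp, hpc⟩ := mem_image.1 hc
    exact card_pos.2 ⟨p, mem_filter.2 ⟨hp, hpc⟩⟩
  have hsub1 : ∑ c ∈ 𝒜.image (fun p => (proj g p).erase j),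
      (#(𝒜.filter fun p => (proj g p).erase j = c) - 1)
      = #𝒜 - #(𝒜.image fun p => (proj g p).erase j) := by
    have := card_eq_sum_ones (𝒜.image fun p => (proj g p).erase j)
    have hs : ∑ c ∈ 𝒜.image (fun p => (proj g p).erase j),
        (#(𝒜.filter fun p => (proj g p).erase j = c) - 1)
        + ∑ c ∈ 𝒜.image (fun p => (proj g p).erase j), 1 = #𝒜 := by
      rw [← sum_add_distrib, ← himg]
      exact sum_congr rfl fun c hc => by have := hpos c hc; omega
    omega
  calc k * (#𝒜 - #(𝒜.image fun p => (proj g p).erase j))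
      = ∑ c ∈ 𝒜.image (fun p => (proj g p).erase j),
          (#(𝒜.filter fun p => (proj g p).erase j = c) - 1) * k := by
        rw [← sum_mul, hsub1, mul_comm]
    _ ≤ ∑ c ∈ 𝒜.image (fun p => (proj g p).erase j), 2 * ∑ y : Fin n,
          min (#((𝒜.filter fun p => (proj g p).erase j = c).filter fun p => y ∈ p))
              (#((𝒜.filter fun p => (proj g p).erase j = c).filter fun p => y ∉ p)) :=
        sum_le_sum hkey
    _ = 2 * ∑ y : Fin n, DD 𝒜 (update g j y) j := by
        rw [← mul_sum]
        congr 1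
        rw [sum_comm]
        exact (sum_congr rfl fun y _ => (hDD y)).symm


lemma DD_eq_sum_QJ (𝒜 : Finset (Finset (Fin n))) (g : Fin m → Fin n) (j : Fin m) :
    DD 𝒜 g j = ∑ B ∈ ((𝒜.image (proj g)).filter fun B => j ∉ B ∧ insert j B ∈ 𝒜.image (proj g)),
      min (wt 𝒜 g (insert j B)) (wt 𝒜 g B) := by
  classical
  have huu : ∀ c : Finset (Fin m), j ∉ c → uu 𝒜 g j c = wt 𝒜 g (insert j c) := by
    intro c hjc
    unfold uu wt
    congr 1
    refine filter_congr fun p _ => ?_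
    constructor
    · rintro ⟨hc, hg⟩
      ext i
      by_cases hij : i = j
      · subst hij
        simp only [mem_proj, hg, mem_insert, true_iff, true_or]
      · rw [mem_insert]
        have : i ∈ (proj g p).erase j ↔ i ∈ proj g p := by rw [mem_erase]; tauto
        rw [← this, hc]
        tauto
    · intro h
      refine ⟨by rw [h, erase_insert hjc], ?_⟩
      exact mem_proj.1 (h ▸ mem_insert_self j c)
  have hvv : ∀ c : Finset (Fin m), j ∉ c → vv 𝒜 g j c = wt 𝒜 g c := by
    intro c hjc
    unfold vv wt
    congr 1
    refine filter_congr fun p _ => ?_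
    constructor
    · rintro ⟨hc, hg⟩
      rw [← hc]
      exact (erase_eq_of_notMem (fun h => hg (mem_proj.1 h))).symm
    · intro h
      have hj : j ∉ proj g p := h ▸ hjc
      exact ⟨by rw [erase_eq_of_notMem hj, h], fun hg => hj (mem_proj.2 hg)⟩
  have hQJsub : ((𝒜.image (proj g)).filter fun B => j ∉ B ∧ insert j B ∈ 𝒜.image (proj g))
      ⊆ 𝒜.image fun p => (proj g p).erase j := by
    intro B hB
    rw [mem_filter] at hB
    obtain ⟨p, hp, rfl⟩ := mem_image.1 hB.1
    exact mem_image.2 ⟨p, hp, by rw [erase_eq_of_notMem hB.2.1]⟩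
  have hwt0 : ∀ c : Finset (Fin m), c ∉ 𝒜.image (proj g) → wt 𝒜 g c = 0 := by
    intro c hc
    rw [wt, card_eq_zero, filter_eq_empty_iff]
    intro p hp h
    exact hc (mem_image.2 ⟨p, hp, h⟩)
  have hzero : ∀ c ∈ 𝒜.image (fun p => (proj g p).erase j),
      c ∉ ((𝒜.image (proj g)).filter fun B => j ∉ B ∧ insert j B ∈ 𝒜.image (proj g)) →
      min (uu 𝒜 g j c) (vv 𝒜 g j c) = 0 := by
    intro c hc hcQJ
    obtain ⟨p, hp, rfl⟩ := mem_image.1 hc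
    have hjc : j ∉ (proj g p).erase j := notMem_erase _ _
    rw [mem_filter] at hcQJ
    push_neg at hcQJ
    by_cases h1 : (proj g p).erase j ∈ 𝒜.image (proj g)
    · have h2 := hcQJ h1 hjc
      have := huu _ hjc
      rw [hwt0 _ h2] at this
      omega
    · have := hvv _ hjc
      rw [hwt0 _ h1] at this
      omega
  rw [DD, ← sum_subset hQJsub hzero]
  refine sum_congr rfl fun B hB => ?_
  have hjB : j ∉ B := ((mem_filter.1 hB).2).1
  rw [huu B hjB, hvv B hjB]

lemma pair_double (R : Finset (Finset (Fin m))) (j : Fin m) :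
    #((R ×ˢ R).filter fun p => symmDiff p.1 p.2 = {j})
      = 2 * #(R.filter fun B => j ∉ B ∧ insert j B ∈ R) := by
  classical
  have hsplit := card_filter_add_card_filter_not
    (s := (R ×ˢ R).filter fun p => symmDiff p.1 p.2 = {j}) (p := fun p => j ∈ p.1)
  have h1 : #(((R ×ˢ R).filter fun p => symmDiff p.1 p.2 = {j}).filter fun p => j ∈ p.1)
      = #(R.filter fun B => j ∉ B ∧ insert j B ∈ R) := by
    refine card_nbij' (fun p => p.2) (fun B => (insert j B, B)) ?_ ?_ ?_ ?_
    · rintro ⟨A, B⟩ hp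
      rw [mem_coe, mem_filter, mem_filter, mem_product] at hp
      obtain ⟨⟨⟨hA, hB⟩, hsd⟩, hjA⟩ := hp
      have hjB : j ∉ B := by
        intro hjB
        have : j ∉ symmDiff A B := by
          rw [mem_symmDiff_finset]; tauto
        rw [hsd] at this
        exact this (mem_singleton_self j)
      have : A = insert j B := (sd_singleton_iff hjB).1 hsd
      rw [mem_coe, mem_filter]
      exact ⟨hB, hjB, this ▸ hA⟩
    · intro B hB
      rw [mem_coe, mem_filter] at hB
      rw [mem_coe, mem_filter, mem_filter, mem_product]
      exact ⟨⟨⟨hB.2.2, hB.1⟩, (sd_singleton_iff hB.2.1).2 rfl⟩, mem_insert_self _ _⟩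
    · rintro ⟨A, B⟩ hp
      rw [mem_coe, mem_filter, mem_filter, mem_product] at hp
      obtain ⟨⟨⟨hA, hB⟩, hsd⟩, hjA⟩ := hp
      have hjB : j ∉ B := by
        intro hjB
        have : j ∉ symmDiff A B := by
          rw [mem_symmDiff_finset]; tauto
        rw [hsd] at this
        exact this (mem_singleton_self j)
      simp only [Prod.mk.injEq]
      exact ⟨((sd_singleton_iff hjB).1 hsd).symm, trivial⟩
    · intro B _; rfl
  have h0 : #(((R ×ˢ R).filter fun p => symmDiff p.1 p.2 = {j}).filter fun p => ¬ j ∈ p.1)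
      = #(R.filter fun B => j ∉ B ∧ insert j B ∈ R) := by
    refine card_nbij' (fun p => p.1) (fun B => (B, insert j B)) ?_ ?_ ?_ ?_
    · rintro ⟨A, B⟩ hp
      rw [mem_coe, mem_filter, mem_filter, mem_product] at hp
      obtain ⟨⟨⟨hA, hB⟩, hsd⟩, hjA⟩ := hp
      have : B = insert j A := by
        rw [symmDiff_comm] at hsd
        exact (sd_singleton_iff hjA).1 hsd
      rw [mem_coe, mem_filter]
      exact ⟨hA, hjA, this ▸ hB⟩
    · intro B hB
      rw [mem_coe, mem_filter] at hB
      rw [mem_coe, mem_filter, mem_filter, mem_product]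
      refine ⟨⟨⟨hB.1, hB.2.2⟩, ?_⟩, hB.2.1⟩
      rw [symmDiff_comm]
      exact (sd_singleton_iff hB.2.1).2 rfl
    · rintro ⟨A, B⟩ hp
      rw [mem_coe, mem_filter, mem_filter, mem_product] at hp
      obtain ⟨⟨⟨hA, hB⟩, hsd⟩, hjA⟩ := hp
      have : B = insert j A := by
        rw [symmDiff_comm] at hsd
        exact (sd_singleton_iff hjA).1 hsd
      simp only [Prod.mk.injEq]
      exact ⟨trivial, this.symm⟩
    · intro B _; rfl
  omega

lemma indicator_card_one (s : Finset (Fin m)) :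
    (if #s = 1 then (1:ℕ) else 0) = ∑ j : Fin m, if s = {j} then 1 else 0 := by
  by_cases h : #s = 1
  · obtain ⟨x, rfl⟩ := card_eq_one.1 h
    rw [if_pos h]
    have : ∀ j : Fin m, (if ({x} : Finset (Fin m)) = {j} then (1:ℕ) else 0)
        = if j = x then 1 else 0 := by
      intro j
      by_cases hj : j = x
      · subst hj; simp
      · rw [if_neg, if_neg hj]
        exact fun h => hj ((Finset.singleton_inj.1 h).symm)
    rw [sum_congr rfl fun j _ => this j]
    simp
  · rw [if_neg h]
    symm
    refine sum_eq_zero fun j _ => ?_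
    rw [if_neg]
    intro hs
    rw [hs] at h
    exact h (card_singleton j)

lemma epc_eq_sum_dirs (R : Finset (Finset (Fin m))) :
    epc R = ∑ j : Fin m, #((R ×ˢ R).filter fun p => symmDiff p.1 p.2 = {j}) := by
  unfold epc
  rw [card_filter]
  calc ∑ p ∈ R ×ˢ R, (if #(symmDiff p.1 p.2) = 1 then (1:ℕ) else 0)
      = ∑ p ∈ R ×ˢ R, ∑ j : Fin m, (if symmDiff p.1 p.2 = {j} then (1:ℕ) else 0) :=
        sum_congr rfl fun p _ => indicator_card_one _
    _ = ∑ j : Fin m, ∑ p ∈ R ×ˢ R, (if symmDiff p.1 p.2 = {j} then (1:ℕ) else 0) := sum_comm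
    _ = ∑ j : Fin m, #((R ×ˢ R).filter fun p => symmDiff p.1 p.2 = {j}) :=
        sum_congr rfl fun j _ => (card_filter _ _).symm

lemma wt_le (𝒜 : Finset (Finset (Fin n))) (g : Fin m → Fin n) (B : Finset (Fin m)) :
    wt 𝒜 g B ≤ #𝒜 := card_filter_le _ _

lemma layer_sum (𝒜 : Finset (Finset (Fin n))) (g : Fin m → Fin n) :
    ∑ t ∈ Icc 1 #𝒜, #((𝒜.image (proj g)).filter fun B => t ≤ wt 𝒜 g B) = #𝒜 := by
  calc ∑ t ∈ Icc 1 #𝒜, #((𝒜.image (proj g)).filter fun B => t ≤ wt 𝒜 g B)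
      = ∑ t ∈ Icc 1 #𝒜, ∑ B ∈ 𝒜.image (proj g), (if t ≤ wt 𝒜 g B then (1:ℕ) else 0) :=
        sum_congr rfl fun t _ => card_filter _ _
    _ = ∑ B ∈ 𝒜.image (proj g), ∑ t ∈ Icc 1 #𝒜, (if t ≤ wt 𝒜 g B then (1:ℕ) else 0) := sum_comm
    _ = ∑ B ∈ 𝒜.image (proj g), wt 𝒜 g B := by
        refine sum_congr rfl fun B _ => ?_
        rw [← card_filter]
        have he : (Icc 1 #𝒜).filter (fun t => t ≤ wt 𝒜 g B) = Icc 1 (wt 𝒜 g B) := by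
          ext t
          simp only [mem_filter, mem_Icc]
          have := wt_le 𝒜 g B
          omega
        rw [he, Nat.card_Icc, Nat.add_sub_cancel]
    _ = #𝒜 := by
        unfold wt
        exact (card_eq_sum_card_fiberwise fun p hp => mem_image_of_mem _ hp).symm

lemma upper_bound {d : ℕ} (𝒜 : Finset (Finset (Fin n))) (g : Fin m → Fin n)
    (hVC : ∀ σ : Finset (Fin n), 𝒜.Shatters σ → #σ ≤ d) :
    ∑ j : Fin m, DD 𝒜 g j ≤ d * #𝒜 := by
  classical
  have perj : ∀ j : Fin m, 2 * DD 𝒜 g j = ∑ t ∈ Icc 1 #𝒜,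
      #((((𝒜.image (proj g)).filter fun B => t ≤ wt 𝒜 g B)
        ×ˢ ((𝒜.image (proj g)).filter fun B => t ≤ wt 𝒜 g B)).filter
        fun p => symmDiff p.1 p.2 = {j}) := by
    intro j
    have e2 : ∀ t : ℕ, ((𝒜.image (proj g)).filter fun B => t ≤ wt 𝒜 g B).filter
        (fun B => j ∉ B ∧ insert j B ∈ (𝒜.image (proj g)).filter fun B => t ≤ wt 𝒜 g B)
        = ((𝒜.image (proj g)).filter fun B => j ∉ B ∧ insert j B ∈ 𝒜.image (proj g)).filter
          (fun B => t ≤ wt 𝒜 g B ∧ t ≤ wt 𝒜 g (insert j B)) := by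
      intro t
      ext B
      simp only [mem_filter]
      tauto
    have e3 : ∑ t ∈ Icc 1 #𝒜,
        #(((𝒜.image (proj g)).filter fun B => j ∉ B ∧ insert j B ∈ 𝒜.image (proj g)).filter
          (fun B => t ≤ wt 𝒜 g B ∧ t ≤ wt 𝒜 g (insert j B)))
        = ∑ B ∈ ((𝒜.image (proj g)).filter fun B => j ∉ B ∧ insert j B ∈ 𝒜.image (proj g)),
            min (wt 𝒜 g (insert j B)) (wt 𝒜 g B) := by
      calc ∑ t ∈ Icc 1 #𝒜, #(_root_.id (((𝒜.image (proj g)).filter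
              fun B => j ∉ B ∧ insert j B ∈ 𝒜.image (proj g)).filter
              (fun B => t ≤ wt 𝒜 g B ∧ t ≤ wt 𝒜 g (insert j B))))
          = ∑ t ∈ Icc 1 #𝒜, ∑ B ∈ ((𝒜.image (proj g)).filter
              fun B => j ∉ B ∧ insert j B ∈ 𝒜.image (proj g)),
              (if t ≤ wt 𝒜 g B ∧ t ≤ wt 𝒜 g (insert j B) then (1:ℕ) else 0) :=
            sum_congr rfl fun t _ => card_filter _ _
        _ = ∑ B ∈ ((𝒜.image (proj g)).filter
              fun B => j ∉ B ∧ insert j B ∈ 𝒜.image (proj g)),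
            ∑ t ∈ Icc 1 #𝒜,
              (if t ≤ wt 𝒜 g B ∧ t ≤ wt 𝒜 g (insert j B) then (1:ℕ) else 0) := sum_comm
        _ = ∑ B ∈ ((𝒜.image (proj g)).filter
              fun B => j ∉ B ∧ insert j B ∈ 𝒜.image (proj g)),
              min (wt 𝒜 g (insert j B)) (wt 𝒜 g B) := by
            refine sum_congr rfl fun B _ => ?_
            rw [← card_filter]
            have he : (Icc 1 #𝒜).filter (fun t => t ≤ wt 𝒜 g B ∧ t ≤ wt 𝒜 g (insert j B))
                = Icc 1 (min (wt 𝒜 g (insert j B)) (wt 𝒜 g B)) := by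
              ext t
              simp only [mem_filter, mem_Icc, le_min_iff]
              have h1 := wt_le 𝒜 g B
              have h2 := wt_le 𝒜 g (insert j B)
              omega
            rw [he, Nat.card_Icc, Nat.add_sub_cancel]
    calc 2 * DD 𝒜 g j
        = 2 * ∑ B ∈ ((𝒜.image (proj g)).filter
            fun B => j ∉ B ∧ insert j B ∈ 𝒜.image (proj g)),
            min (wt 𝒜 g (insert j B)) (wt 𝒜 g B) := by rw [DD_eq_sum_QJ]
      _ = 2 * ∑ t ∈ Icc 1 #𝒜,
          #(((𝒜.image (proj g)).filter fun B => j ∉ B ∧ insert j B ∈ 𝒜.image (proj g)).filter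
            (fun B => t ≤ wt 𝒜 g B ∧ t ≤ wt 𝒜 g (insert j B))) := by rw [e3]
      _ = ∑ t ∈ Icc 1 #𝒜, 2 *
          #(((𝒜.image (proj g)).filter fun B => j ∉ B ∧ insert j B ∈ 𝒜.image (proj g)).filter
            (fun B => t ≤ wt 𝒜 g B ∧ t ≤ wt 𝒜 g (insert j B))) := mul_sum _ _ _
      _ = ∑ t ∈ Icc 1 #𝒜,
          #((((𝒜.image (proj g)).filter fun B => t ≤ wt 𝒜 g B)
            ×ˢ ((𝒜.image (proj g)).filter fun B => t ≤ wt 𝒜 g B)).filter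
            fun p => symmDiff p.1 p.2 = {j}) := by
          refine sum_congr rfl fun t _ => ?_
          rw [pair_double, e2]
  have hmain : 2 * ∑ j : Fin m, DD 𝒜 g j ≤ 2 * (d * #𝒜) := by
    calc 2 * ∑ j : Fin m, DD 𝒜 g j = ∑ j : Fin m, 2 * DD 𝒜 g j := mul_sum _ _ _
      _ = ∑ j : Fin m, ∑ t ∈ Icc 1 #𝒜,
          #((((𝒜.image (proj g)).filter fun B => t ≤ wt 𝒜 g B)
            ×ˢ ((𝒜.image (proj g)).filter fun B => t ≤ wt 𝒜 g B)).filter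
            fun p => symmDiff p.1 p.2 = {j}) := sum_congr rfl fun j _ => perj j
      _ = ∑ t ∈ Icc 1 #𝒜, ∑ j : Fin m,
          #((((𝒜.image (proj g)).filter fun B => t ≤ wt 𝒜 g B)
            ×ˢ ((𝒜.image (proj g)).filter fun B => t ≤ wt 𝒜 g B)).filter
            fun p => symmDiff p.1 p.2 = {j}) := sum_comm
      _ = ∑ t ∈ Icc 1 #𝒜, epc ((𝒜.image (proj g)).filter fun B => t ≤ wt 𝒜 g B) :=
          sum_congr rfl fun t _ => (epc_eq_sum_dirs _).symm
      _ ≤ ∑ t ∈ Icc 1 #𝒜, 2 * d * #((𝒜.image (proj g)).filter fun B => t ≤ wt 𝒜 g B) := by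
          refine sum_le_sum fun t _ => ?_
          refine epc_le univ d _ (fun A _ => subset_univ A) ?_
          intro σ hσ
          exact vc_proj hVC g σ (hσ.mono_left (filter_subset _ _))
      _ = 2 * d * ∑ t ∈ Icc 1 #𝒜, #((𝒜.image (proj g)).filter fun B => t ≤ wt 𝒜 g B) :=
          (mul_sum _ _ _).symm
      _ = 2 * (d * #𝒜) := by rw [layer_sum]; ring
  omega

lemma master {n : ℕ} (d k : ℕ) (hk : 1 ≤ k) (hkn : k ≤ n)
    (𝒜 : Finset (Finset (Fin n)))
    (hVC : ∀ σ, 𝒜.Shatters σ → #σ ≤ d)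
    (hsep : ∀ A ∈ 𝒜, ∀ B ∈ 𝒜, A ≠ B → k ≤ #(symmDiff A B)) :
    #𝒜 ≤ 2 * ∑ i ∈ Iic d, (4 * d * n / k + 1).choose i := by
  classical
  have hΦ1 : 1 ≤ ∑ i ∈ Iic d, (4 * d * n / k + 1).choose i := by
    calc 1 = (4*d*n/k+1).choose 0 := (Nat.choose_zero_right _).symm
      _ ≤ ∑ i ∈ Iic d, (4 * d * n / k + 1).choose i :=
          single_le_sum (fun i _ => Nat.zero_le _) (mem_Iic.2 (Nat.zero_le d))
  rcases Nat.eq_zero_or_pos d with rfl | hd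
  · have hcard : #𝒜 ≤ 1 := by
      by_contra h
      push_neg at h
      obtain ⟨A, hA, B, hB, hAB⟩ := one_lt_card.1 h
      have hk' : 1 ≤ #(symmDiff A B) := le_trans hk (hsep A hA B hB hAB)
      have hpos : 0 < #(symmDiff A B) := by omega
      obtain ⟨i, hi⟩ := card_pos.1 hpos
      have hsh : 𝒜.Shatters {i} := by
        intro t ht
        rcases Finset.subset_singleton_iff.1 ht with rfl | rfl
        · rw [mem_symmDiff_finset] at hi
          rcases hi with ⟨h1, h2⟩ | ⟨h1, h2⟩
          · exact ⟨B, hB, singleton_inter_of_notMem h2⟩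
          · exact ⟨A, hA, singleton_inter_of_notMem h2⟩
        · rw [mem_symmDiff_finset] at hi
          rcases hi with ⟨h1, h2⟩ | ⟨h1, h2⟩
          · exact ⟨A, hA, singleton_inter_of_mem h1⟩
          · exact ⟨B, hB, singleton_inter_of_mem h1⟩
      have := hVC _ hsh
      rw [card_singleton] at this
      omega
    omega
  have hn : 1 ≤ n := le_trans hk hkn
  set m := 4 * d * n / k + 1 with hm
  set N := #𝒜 with hN
  set Φ := ∑ i ∈ Iic d, m.choose i with hΦ
  have hmcls : ∀ (g : Fin m → Fin n) (j : Fin m),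
      #(𝒜.image fun p => (proj g p).erase j) ≤ Φ := by
    intro g j
    have h1 : (𝒜.image fun p => (proj g p).erase j)
        = (𝒜.image (proj g)).image (fun B => B.erase j) := by
      rw [image_image]; rfl
    rw [h1]
    exact (card_image_le).trans (sauer_proj hVC g)
  have hcardF : Fintype.card (Fin m → Fin n) = n ^ m := by
    rw [Fintype.card_fun, Fintype.card_fin, Fintype.card_fin]
  have hupper : ∑ g : Fin m → Fin n, ∑ j : Fin m, DD 𝒜 g j ≤ n ^ m * (d * N) := by
    calc ∑ g : Fin m → Fin n, ∑ j : Fin m, DD 𝒜 g j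
        ≤ ∑ _g : Fin m → Fin n, d * N := sum_le_sum fun g _ => upper_bound 𝒜 g hVC
      _ = n ^ m * (d * N) := by rw [sum_const, card_univ, hcardF, smul_eq_mul]
  have hlower : ∀ j : Fin m,
      n ^ m * (k * (N - Φ)) ≤ 2 * (n * ∑ g : Fin m → Fin n, DD 𝒜 g j) := by
    intro j
    have hinv : Function.Involutive
        (fun p : (Fin m → Fin n) × Fin n => (update p.1 j p.2, p.1 j)) := by
      rintro ⟨g, y⟩
      simp only [Prod.mk.injEq]
      constructor
      · funext i
        by_cases hij : i = j
        · subst hij; rw [update_self]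
        · rw [update_of_ne hij, update_of_ne hij]
      · exact update_self j y g
    have hre : ∑ p : (Fin m → Fin n) × Fin n, DD 𝒜 (update p.1 j p.2) j
        = n * ∑ g : Fin m → Fin n, DD 𝒜 g j := by
      calc ∑ p : (Fin m → Fin n) × Fin n, DD 𝒜 (update p.1 j p.2) j
          = ∑ p : (Fin m → Fin n) × Fin n, DD 𝒜 p.1 j :=
            Fintype.sum_equiv (hinv.toPerm _) _ _ (fun p => rfl)
        _ = ∑ g : Fin m → Fin n, ∑ _y : Fin n, DD 𝒜 g j := by rw [Fintype.sum_prod_type]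
        _ = ∑ g : Fin m → Fin n, n * DD 𝒜 g j := by
            refine sum_congr rfl fun g _ => ?_
            rw [sum_const, card_univ, Fintype.card_fin, smul_eq_mul]
        _ = n * ∑ g : Fin m → Fin n, DD 𝒜 g j := by rw [← mul_sum]
    calc n ^ m * (k * (N - Φ))
        = ∑ _g : Fin m → Fin n, k * (N - Φ) := by
          rw [sum_const, card_univ, hcardF, smul_eq_mul]
      _ ≤ ∑ g : Fin m → Fin n, k * (N - #(𝒜.image fun p => (proj g p).erase j)) :=
          sum_le_sum fun g _ =>
            Nat.mul_le_mul_left _ (Nat.sub_le_sub_left (hmcls g j) _)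
      _ ≤ ∑ g : Fin m → Fin n, 2 * ∑ y : Fin n, DD 𝒜 (update g j y) j :=
          sum_le_sum fun g _ => lower_bound hsep g j
      _ = 2 * ∑ g : Fin m → Fin n, ∑ y : Fin n, DD 𝒜 (update g j y) j := by rw [← mul_sum]
      _ = 2 * (n * ∑ g : Fin m → Fin n, DD 𝒜 g j) := by
          rw [← hre]
          congr 1
          exact (Fintype.sum_prod_type
            (f := fun p : (Fin m → Fin n) × Fin n => DD 𝒜 (update p.1 j p.2) j)).symm
  have hcomb : m * (n ^ m * (k * (N - Φ))) ≤ 2 * n * (n ^ m * (d * N)) := by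
    calc m * (n ^ m * (k * (N - Φ)))
        = ∑ _j : Fin m, n ^ m * (k * (N - Φ)) := by
          rw [sum_const, card_univ, Fintype.card_fin, smul_eq_mul]
      _ ≤ ∑ j : Fin m, 2 * (n * ∑ g : Fin m → Fin n, DD 𝒜 g j) :=
          sum_le_sum fun j _ => hlower j
      _ = 2 * n * ∑ j : Fin m, ∑ g : Fin m → Fin n, DD 𝒜 g j := by
          rw [← mul_sum, ← mul_sum, mul_assoc]
      _ = 2 * n * ∑ g : Fin m → Fin n, ∑ j : Fin m, DD 𝒜 g j := by rw [sum_comm]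
      _ ≤ 2 * n * (n ^ m * (d * N)) := Nat.mul_le_mul_left _ hupper
  have hnm : 0 < n ^ m := pow_pos hn m
  have hcomb2 : m * k * (N - Φ) ≤ 2 * n * d * N := by
    have h1 : n ^ m * (m * k * (N - Φ)) ≤ n ^ m * (2 * n * d * N) := by
      calc n ^ m * (m * k * (N - Φ)) = m * (n ^ m * (k * (N - Φ))) := by ring
        _ ≤ 2 * n * (n ^ m * (d * N)) := hcomb
        _ = n ^ m * (2 * n * d * N) := by ring
    exact Nat.le_of_mul_le_mul_left h1 hnm
  have hmk : 4 * d * n + 1 ≤ m * k := by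
    have h := Nat.lt_div_mul_add (a := 4 * d * n) (hk : 0 < k)
    calc 4 * d * n + 1 ≤ 4 * d * n / k * k + k := h
      _ = m * k := by rw [hm]; ring
  have hfin : 2 * (N - Φ) ≤ N := by
    have h1 : (4 * d * n) * (N - Φ) ≤ 2 * n * d * N :=
      le_trans (Nat.mul_le_mul_right _ (by omega : 4 * d * n ≤ m * k)) hcomb2
    have h2 : 2 * n * d * (2 * (N - Φ)) ≤ 2 * n * d * N := by
      calc 2 * n * d * (2 * (N - Φ)) = 4 * d * n * (N - Φ) := by ring
        _ ≤ 2 * n * d * N := h1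
    exact Nat.le_of_mul_le_mul_left h2 (by
      have : 0 < 2 * n * d := Nat.mul_pos (Nat.mul_pos (by omega) hn) hd
      omega)
  omega

end Stmt16Aux

open Finset Function in
/-- Haussler-type packing bound: if `T ⊆ {0,1}^n` has VC dimension at most `d`, then for
every `0 < ε ≤ √n`, any `ε`-separated subset of `T` in the Euclidean metric has
cardinality at most `C(d) (√n/ε)^{2d}`. -/
theorem stmt16 (d : ℕ) : ∃ C > 0, ∀ (n : ℕ) (T : Set (Fin n → ℝ)),
    (∀ t ∈ T, ∀ i, t i = 0 ∨ t i = 1) →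
    (∀ σ : Finset (Fin n),
      (∀ J ⊆ σ, ∃ t ∈ T, (∀ i ∈ J, t i = 1) ∧ ∀ i ∈ σ \ J, t i = 0) → σ.card ≤ d) →
    ∀ ε : ℝ, 0 < ε → ε ≤ Real.sqrt n →
    ∀ S : Finset (Fin n → ℝ), ↑S ⊆ T →
      (∀ a ∈ S, ∀ b ∈ S, a ≠ b → ε ≤ Real.sqrt (∑ i, (a i - b i) ^ 2)) →
      (S.card : ℝ) ≤ C * (Real.sqrt n / ε) ^ (2 * d) := by
  classical
  refine ⟨2 * ((d:ℝ) + 1) * (4 * d + 1) ^ d, by positivity, ?_⟩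
  intro n T hT01 hVCT ε hε hεn S hST hsepS
  set f : (Fin n → ℝ) → Finset (Fin n) := fun t => univ.filter (fun i => t i = 1) with hf
  set 𝒜 := S.image f with h𝒜
  have h01 : ∀ t ∈ S, ∀ i, t i = 0 ∨ t i = 1 := fun t ht => hT01 t (hST ht)
  have hmemf : ∀ (t : Fin n → ℝ) (i : Fin n), i ∈ f t ↔ t i = 1 := by
    intro t i; simp [hf]
  have hinj : Set.InjOn f S := by
    intro a ha b hb hab
    funext i
    rcases h01 a ha i with h1 | h1 <;> rcases h01 b hb i with h2 | h2
    · rw [h1, h2]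
    · exfalso
      have hib : i ∈ f b := (hmemf b i).2 h2
      rw [← hab] at hib
      have := (hmemf a i).1 hib
      rw [h1] at this
      norm_num at this
    · exfalso
      have hia : i ∈ f a := (hmemf a i).2 h1
      rw [hab] at hia
      have := (hmemf b i).1 hia
      rw [h2] at this
      norm_num at this
    · rw [h1, h2]
  have hcard : #𝒜 = #S := card_image_of_injOn hinj
  set k := ⌈ε ^ 2⌉₊ with hkdef
  have hε2 : (0:ℝ) < ε ^ 2 := by positivity
  have hk1 : 1 ≤ k := Nat.one_le_ceil_iff.2 hε2
  have hεn2 : ε ^ 2 ≤ (n : ℝ) := by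
    calc ε ^ 2 ≤ Real.sqrt n ^ 2 := by
          exact pow_le_pow_left₀ hε.le hεn 2
      _ = (n : ℝ) := Real.sq_sqrt (Nat.cast_nonneg n)
  have hkn : k ≤ n := by
    rw [hkdef]
    exact Nat.ceil_le.2 hεn2
  have hdist : ∀ a ∈ S, ∀ b ∈ S,
      (∑ i, (a i - b i) ^ 2) = (#(symmDiff (f a) (f b)) : ℝ) := by
    intro a ha b hb
    have hcast : (#(symmDiff (f a) (f b)) : ℝ)
        = ∑ i : Fin n, (if i ∈ symmDiff (f a) (f b) then (1:ℝ) else 0) := by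
      rw [Finset.sum_ite_mem, univ_inter, sum_const, nsmul_eq_mul, mul_one]
    rw [hcast]
    refine sum_congr rfl fun i _ => ?_
    have hsd : i ∈ symmDiff (f a) (f b) ↔ ((a i = 1 ∧ ¬ b i = 1) ∨ (b i = 1 ∧ ¬ a i = 1)) := by
      rw [Stmt16Aux.mem_symmDiff_finset, hmemf, hmemf]
    rcases h01 a ha i with h1 | h1 <;> rcases h01 b hb i with h2 | h2 <;>
      norm_num [hsd, h1, h2]
  have hsep𝒜 : ∀ A ∈ 𝒜, ∀ B ∈ 𝒜, A ≠ B → k ≤ #(symmDiff A B) := by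
    intro A hA B hB hAB
    obtain ⟨a, ha, rfl⟩ := mem_image.1 hA
    obtain ⟨b, hb, rfl⟩ := mem_image.1 hB
    have hab : a ≠ b := fun h => hAB (by rw [h])
    have h1 := hsepS a ha b hb hab
    have h2 : ε ^ 2 ≤ (#(symmDiff (f a) (f b)) : ℝ) := by
      have hnn : (0:ℝ) ≤ ∑ i, (a i - b i) ^ 2 := by positivity
      have := (Real.le_sqrt hε.le hnn).1 h1
      rwa [hdist a ha b hb] at this
    exact Nat.ceil_le.2 h2
  have hVC𝒜 : ∀ σ : Finset (Fin n), 𝒜.Shatters σ → #σ ≤ d := by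
    intro σ hσ
    refine hVCT σ ?_
    intro J hJ
    obtain ⟨A, hA, hσA⟩ := hσ hJ
    obtain ⟨p, hp, rfl⟩ := mem_image.1 hA
    refine ⟨p, hST hp, ?_, ?_⟩
    · intro i hi
      rw [← hσA] at hi
      exact (hmemf p i).1 (mem_inter.1 hi).2
    · intro i hi
      rw [mem_sdiff] at hi
      rcases h01 p hp i with h | h
      · exact h
      · exfalso
        have : i ∈ σ ∩ f p := mem_inter.2 ⟨hi.1, (hmemf p i).2 h⟩
        rw [hσA] at this
        exact hi.2 this
  have hmaster := Stmt16Aux.master d k hk1 hkn 𝒜 hVC𝒜 hsep𝒜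
  set m := 4 * d * n / k + 1 with hm
  have hm1 : 1 ≤ m := Nat.le_add_left _ _
  have hΦm : ∑ i ∈ Iic d, m.choose i ≤ (d + 1) * m ^ d := by
    calc ∑ i ∈ Iic d, m.choose i ≤ ∑ i ∈ Iic d, m ^ d :=
        sum_le_sum fun i hi =>
          (Nat.choose_le_pow m i).trans (Nat.pow_le_pow_right hm1 (mem_Iic.1 hi))
      _ = (d + 1) * m ^ d := by rw [sum_const, Nat.card_Iic, smul_eq_mul]
  have hS𝒜 : #S ≤ 2 * ((d + 1) * m ^ d) := by
    rw [← hcard]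
    exact hmaster.trans (Nat.mul_le_mul_left 2 hΦm)
  -- real estimates
  have hkR : (0:ℝ) < (k : ℝ) := by exact_mod_cast hk1
  have honenk : (1:ℝ) ≤ (n : ℝ) / (k : ℝ) := by
    rw [le_div_iff₀ hkR, one_mul]
    exact_mod_cast hkn
  have hmR : (m : ℝ) ≤ (4 * (d:ℝ) + 1) * ((n : ℝ) / ε ^ 2) := by
    have h1 : ((4 * d * n / k : ℕ) : ℝ) ≤ ((4 * d * n : ℕ) : ℝ) / (k : ℝ) := Nat.cast_div_le
    have h2 : ((4 * d * n : ℕ) : ℝ) / (k : ℝ) = 4 * (d:ℝ) * ((n:ℝ) / (k:ℝ)) := by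
      push_cast
      ring
    have h3 : (m : ℝ) = ((4 * d * n / k : ℕ) : ℝ) + 1 := by
      rw [hm]
      push_cast
      ring
    have h4 : (m : ℝ) ≤ (4 * (d:ℝ) + 1) * ((n : ℝ) / (k : ℝ)) := by
      rw [h3]
      calc ((4 * d * n / k : ℕ) : ℝ) + 1 ≤ 4 * (d:ℝ) * ((n:ℝ) / (k:ℝ)) + 1 := by
            rw [← h2]; exact add_le_add_left h1 1
        _ ≤ 4 * (d:ℝ) * ((n:ℝ) / (k:ℝ)) + (n:ℝ) / (k:ℝ) := add_le_add_right honenk _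
        _ = (4 * (d:ℝ) + 1) * ((n : ℝ) / (k : ℝ)) := by ring
    refine h4.trans ?_
    have hnk2 : (n : ℝ) / (k : ℝ) ≤ (n : ℝ) / ε ^ 2 :=
      div_le_div_of_nonneg_left (Nat.cast_nonneg n) hε2 (Nat.le_ceil _)
    have h4d : (0:ℝ) ≤ 4 * (d:ℝ) + 1 := by positivity
    exact mul_le_mul_of_nonneg_left hnk2 h4d
  have hpow : (Real.sqrt n / ε) ^ (2 * d) = ((n : ℝ) / ε ^ 2) ^ d := by
    rw [pow_mul, div_pow, Real.sq_sqrt (Nat.cast_nonneg n)]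
  calc (#S : ℝ) ≤ 2 * (((d:ℝ) + 1) * (m : ℝ) ^ d) := by exact_mod_cast hS𝒜
    _ ≤ 2 * (((d:ℝ) + 1) * ((4 * (d:ℝ) + 1) * ((n : ℝ) / ε ^ 2)) ^ d) := by
        have hd1 : (0:ℝ) ≤ (d:ℝ) + 1 := by positivity
        have := pow_le_pow_left₀ (Nat.cast_nonneg m) hmR d
        have h5 : ((d:ℝ) + 1) * (m : ℝ) ^ d
            ≤ ((d:ℝ) + 1) * ((4 * (d:ℝ) + 1) * ((n : ℝ) / ε ^ 2)) ^ d :=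
          mul_le_mul_of_nonneg_left this hd1
        linarith
    _ = 2 * ((d:ℝ) + 1) * (4 * (d:ℝ) + 1) ^ d * ((n : ℝ) / ε ^ 2) ^ d := by
        rw [mul_pow]
        ring
    _ = 2 * ((d:ℝ) + 1) * (4 * (d:ℝ) + 1) ^ d * (Real.sqrt n / ε) ^ (2 * d) := by
        rw [hpow]
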